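/- Under the Uniform popularity distribution and M = o(K), the communication cost of Strategy I is C = Θ(√(K/M)) as n → ∞ (with K = K(n), M = M(n) in the regimes of the model). -/

import Mathlib

open scoped Classical BigOperators
open Filter

/-- Nodes of the `m × m` torus grid (a `√n × √n` grid with wrap-around, `n = m²`). -/
abbrev Node (m : ℕ) := Fin m × Fin m

/-- Wrap-around distance between two coordinates in `Fin m`. -/
def cdist {m : ℕ} (a b : Fin m) : ℕ :=
  min ((a.val + m - b.val) % m) ((b.val + m - a.val) % m)

/-- Graph (shortest-path) distance on the torus grid. -/
def torusDist {m : ℕ} (u v : Node m) : ℕ := cdist u.1 v.1 + cdist u.2 v.2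

/-- A cache placement: each of the `m²` nodes fills `M` cache slots with files from a
library of `K` files.  Under the Uniform popularity distribution the random placement
is uniform over all such functions (each slot i.i.d. uniform on the `K` files). -/
abbrev Placement (m M K : ℕ) := Node m → Fin M → Fin K

/-- Node `u` has cached file `j`. -/
def cached {m M K : ℕ} (ω : Placement m M K) (u : Node m) (j : Fin K) : Prop :=
  ∃ i, ω u i = j

/-- Probability of an event under the uniform measure on a finite type. -/
noncomputable def unifProb {Ω : Type*} [Fintype Ω] (E : Set Ω) : ℝ :=
  ((Finset.univ.filter (fun ω => ω ∈ E)).card : ℝ) / (Fintype.card Ω : ℝ)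

/-- Distance from `u` to the nearest node that cached file `j` (the distance travelled
by a request served by Strategy I; every nearest-replica tie-breaking gives this same
distance). -/
noncomputable def nearestDist {m M K : ℕ} (ω : Placement m M K) (u : Node m)
    (j : Fin K) : ℕ :=
  sInf {d | ∃ v, cached ω v j ∧ torusDist u v = d}

/-- Communication cost of Strategy I under the Uniform popularity distribution:
the expectation — over the uniform random placement, the uniform random origin and the
uniform random requested file — of the graph distance between a request's origin and
the node serving it. -/
noncomputable def commCostI (m M K : ℕ) : ℝ :=
  (∑ ω : Placement m M K, ∑ u : Node m, ∑ j : Fin K, (nearestDist ω u j : ℝ)) /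
    ((Fintype.card (Placement m M K) : ℝ) * ((m ^ 2 : ℕ) : ℝ) * (K : ℝ))

namespace S4
open Finset

variable {m M K : ℕ}

lemma mod_small (a m : ℕ) (h : a < 2*m) : a % m = if a < m then a else a - m := by
  split_ifs with h1
  · exact Nat.mod_eq_of_lt h1
  · rw [Nat.mod_eq_sub_mod (by omega)]
    exact Nat.mod_eq_of_lt (by omega)

variable {m M K : ℕ}

def ball (u : Node m) (r : ℕ) : Finset (Node m) :=
  Finset.univ.filter (fun v => torusDist u v ≤ r)

lemma mem_ball {u v : Node m} {r : ℕ} : v ∈ ball u r ↔ torusDist u v ≤ r := by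
  simp [ball]

lemma cdist_le (a b : Fin m) : 2 * cdist a b ≤ m := by
  have ha := a.isLt; have hb := b.isLt
  unfold cdist
  rw [mod_small _ _ (by omega), mod_small _ _ (by omega)]
  split_ifs <;> omega

lemma torusDist_le (u v : Node m) : torusDist u v ≤ m := by
  have h1 := cdist_le u.1 v.1
  have h2 := cdist_le u.2 v.2
  unfold torusDist; omega

set_option maxHeartbeats 1000000 in
lemma card_coordBall (a : Fin m) (r : ℕ) :
    (Finset.univ.filter fun b : Fin m => cdist a b ≤ r).card ≤ 2*r+1 := by
  rw [← Finset.card_range (2*r+1)]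
  refine Finset.card_le_card_of_injOn
      (fun b : Fin m => if (b.val + m - a.val) % m ≤ r then r + (b.val + m - a.val) % m
                else r - (a.val + m - b.val) % m) ?_ ?_
  · intro b hb
    simp only [Finset.coe_filter, Set.mem_setOf_eq, Finset.mem_coe, Finset.mem_filter, Finset.mem_univ, true_and] at hb ⊢
    unfold cdist at hb
    have ha := a.isLt; have hbl := b.isLt
    simp only [Finset.mem_range,
      mod_small (b.val + m - a.val) m (by omega),
      mod_small (a.val + m - b.val) m (by omega)] at hb ⊢
    split_ifs at hb ⊢ <;> omega
  · intro b1 h1 b2 h2 he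
    simp only [Finset.coe_filter, Set.mem_setOf_eq, Finset.mem_univ, true_and] at h1 h2
    unfold cdist at h1 h2
    have ha := a.isLt; have hb1 := b1.isLt; have hb2 := b2.isLt
    simp only at he
    rw [mod_small (b1.val + m - a.val) m (by omega)] at h1 he
    rw [mod_small (a.val + m - b1.val) m (by omega)] at h1 he
    rw [mod_small (b2.val + m - a.val) m (by omega)] at h2 he
    rw [mod_small (a.val + m - b2.val) m (by omega)] at h2 he
    apply Fin.ext
    split_ifs at h1 h2 he <;> omega

lemma card_ball_le (u : Node m) (r : ℕ) :
    (ball u r).card ≤ (2*r+1)^2 := by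
  have hsub : ball u r ⊆
      (Finset.univ.filter fun b : Fin m => cdist u.1 b ≤ r) ×ˢ
      (Finset.univ.filter fun b : Fin m => cdist u.2 b ≤ r) := by
    intro v hv
    rw [mem_ball] at hv
    unfold torusDist at hv
    simp only [Finset.mem_product, Finset.mem_filter, Finset.mem_univ, true_and]
    omega
  calc (ball u r).card ≤ _ := Finset.card_le_card hsub
    _ = _ := Finset.card_product _ _
    _ ≤ (2*r+1) * (2*r+1) := Nat.mul_le_mul (card_coordBall _ _) (card_coordBall _ _)
    _ = (2*r+1)^2 := (sq _).symm

lemma cdist_shift (a b : Fin m) (x : ℕ) (hx : x < m) (hb : b.val = (a.val + x) % m) :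
    cdist a b ≤ x := by
  have ha := a.isLt
  unfold cdist
  rw [hb]
  rw [mod_small (a.val + x) m (by omega)]
  split_ifs with hc
  · rw [mod_small (a.val + m - (a.val + x)) m (by omega),
        mod_small (a.val + x + m - a.val) m (by omega)]
    split_ifs <;> omega
  · rw [mod_small (a.val + m - (a.val + x - m)) m (by omega),
        mod_small (a.val + x - m + m - a.val) m (by omega)]
    split_ifs <;> omega

lemma card_ball_ge (u : Node m) (r s : ℕ) (h2s : 2*s ≤ r) (hsm : s < m) :
    (s+1)^2 ≤ (ball u r).card := by
  have hm : 0 < m := by omega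
  have hcard : ((Finset.range (s+1)) ×ˢ (Finset.range (s+1))).card = (s+1)^2 := by
    rw [Finset.card_product, Finset.card_range, sq]
  rw [← hcard]
  refine Finset.card_le_card_of_injOn
      (fun p : ℕ × ℕ => ((⟨(u.1.val + p.1) % m, Nat.mod_lt _ hm⟩ : Fin m),
                 (⟨(u.2.val + p.2) % m, Nat.mod_lt _ hm⟩ : Fin m))) ?_ ?_
  · intro p hp
    simp only [Finset.mem_coe, Finset.coe_product, Set.mem_prod, Finset.mem_product, Finset.mem_range] at hp ⊢
    rw [mem_ball]
    have b1 : cdist u.1 (⟨(u.1.val + p.1) % m, Nat.mod_lt _ hm⟩ : Fin m) ≤ p.1 :=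
      cdist_shift _ _ _ (by omega) rfl
    have b2 : cdist u.2 (⟨(u.2.val + p.2) % m, Nat.mod_lt _ hm⟩ : Fin m) ≤ p.2 :=
      cdist_shift _ _ _ (by omega) rfl
    exact le_trans (add_le_add b1 b2) (show p.1 + p.2 ≤ r by omega)
  · intro p1 hp1 p2 hp2 he
    simp only [Finset.coe_product, Set.mem_prod, Finset.mem_coe, Finset.mem_range] at hp1 hp2
    simp only [Prod.mk.injEq, Fin.mk.injEq] at he
    obtain ⟨he1, he2⟩ := he
    have h1 := u.1.isLt; have h2 := u.2.isLt
    rw [mod_small (u.1.val + p1.1) m (by omega), mod_small (u.1.val + p2.1) m (by omega)] at he1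
    rw [mod_small (u.2.val + p1.2) m (by omega), mod_small (u.2.val + p2.2) m (by omega)] at he2
    have e1 : p1.1 = p2.1 := by split_ifs at he1 <;> omega
    have e2 : p1.2 = p2.2 := by split_ifs at he2 <;> omega
    exact Prod.ext e1 e2


lemma card_node : Fintype.card (Node m) = m*m := by
  simp [Fintype.card_prod]

lemma card_placement : Fintype.card (Placement m M K) = (K^M)^(m*m) := by
  rw [Fintype.card_fun, Fintype.card_fun, Fintype.card_fin, Fintype.card_fin, card_node]

lemma card_avoid (j : Fin K) :
    (Finset.univ.filter fun f : Fin M → Fin K => ∀ i, f i ≠ j).card = (K-1)^M := by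
  have h : (Finset.univ.filter fun f : Fin M → Fin K => ∀ i, f i ≠ j)
      = Fintype.piFinset (fun _ : Fin M => Finset.univ.erase j) := by
    ext f
    simp [Fintype.mem_piFinset]
  rw [h, Fintype.card_piFinset]
  simp [Finset.card_erase_of_mem, Finset.card_univ]

lemma card_avoidSet (j : Fin K) (S : Finset (Node m)) :
    (Finset.univ.filter fun ω : Placement m M K => ∀ v ∈ S, ∀ i, ω v i ≠ j).card
      = ((K-1)^M)^S.card * (K^M)^(m*m - S.card) := by
  have h : (Finset.univ.filter fun ω : Placement m M K => ∀ v ∈ S, ∀ i, ω v i ≠ j)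
      = Fintype.piFinset (fun v : Node m =>
          if v ∈ S then (Finset.univ.filter fun f : Fin M → Fin K => ∀ i, f i ≠ j)
          else Finset.univ) := by
    ext ω
    simp only [Finset.mem_filter, Finset.mem_univ, true_and, Fintype.mem_piFinset]
    constructor
    · intro hω v
      by_cases hv : v ∈ S
      · simp only [hv, if_true, Finset.mem_filter, Finset.mem_univ, true_and]
        exact hω v hv
      · simp [hv]
    · intro hω v hv i
      have h2 := hω v
      rw [if_pos hv, Finset.mem_filter] at h2
      exact h2.2 i
  rw [h, Fintype.card_piFinset]
  have h2 : ∀ v : Node m, (if v ∈ S then (Finset.univ.filter fun f : Fin M → Fin K => ∀ i, f i ≠ j)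
          else (Finset.univ : Finset (Fin M → Fin K))).card
      = if v ∈ S then (K-1)^M else K^M := by
    intro v
    split_ifs
    · exact card_avoid j
    · rw [Finset.card_univ, Fintype.card_fun, Fintype.card_fin, Fintype.card_fin]
  rw [Finset.prod_congr rfl (fun v _ => h2 v), Finset.prod_ite, Finset.prod_const, Finset.prod_const]
  congr 1
  · congr 1
    simp
  · congr 1
    rw [Finset.filter_not, ← Finset.compl_eq_univ_sdiff]
    · rw [Finset.card_compl, card_node]
      congr 1
      simp

lemma lt_nearest_iff (ω : Placement m M K) (u : Node m) (j : Fin K) (r : ℕ) :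
    r < nearestDist ω u j ↔ (∃ v, cached ω v j) ∧ ∀ v, cached ω v j → r < torusDist u v := by
  unfold nearestDist
  rcases em (∃ v, cached ω v j) with h | h
  · obtain ⟨v0, hv0⟩ := h
    have hne : {d | ∃ v, cached ω v j ∧ torusDist u v = d}.Nonempty := ⟨_, v0, hv0, rfl⟩
    constructor
    · intro hr
      exact ⟨⟨v0, hv0⟩, fun v hv => lt_of_lt_of_le hr (Nat.sInf_le ⟨v, hv, rfl⟩)⟩
    · rintro ⟨-, hall⟩
      obtain ⟨v, hv, hd⟩ := Nat.sInf_mem hne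
      exact hd ▸ hall v hv
  · have he : {d | ∃ v, cached ω v j ∧ torusDist u v = d} = ∅ := by
      ext d
      simp only [Set.mem_setOf_eq, Set.mem_empty_iff_false, iff_false]
      rintro ⟨v, hv, -⟩
      exact h ⟨v, hv⟩
    rw [he, Nat.sInf_empty]
    constructor
    · intro hr; exact absurd hr (Nat.not_lt_zero r)
    · rintro ⟨hv, -⟩; exact absurd hv h

lemma nearest_le (ω : Placement m M K) (u : Node m) (j : Fin K) : nearestDist ω u j ≤ m := by
  unfold nearestDist
  rcases Set.eq_empty_or_nonempty {d | ∃ v, cached ω v j ∧ torusDist u v = d} with h | h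
  · rw [h, Nat.sInf_empty]; exact Nat.zero_le m
  · obtain ⟨d, v, hv, hd⟩ := h
    exact le_trans (Nat.sInf_le ⟨v, hv, hd⟩) (hd ▸ torusDist_le u v)

lemma count_gt (u : Node m) (j : Fin K) (r : ℕ) :
    (Finset.univ.filter fun ω : Placement m M K => r < nearestDist ω u j).card
      = ((K-1)^M)^((ball u r).card) * (K^M)^(m*m - (ball u r).card) - ((K-1)^M)^(m*m) := by
  have hsplit : (Finset.univ.filter fun ω : Placement m M K => r < nearestDist ω u j)
      = (Finset.univ.filter fun ω : Placement m M K => ∀ v ∈ ball u r, ∀ i, ω v i ≠ j) \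
        (Finset.univ.filter fun ω : Placement m M K =>
          ∀ v ∈ (Finset.univ : Finset (Node m)), ∀ i, ω v i ≠ j) := by
    ext ω
    simp only [Finset.mem_sdiff, Finset.mem_filter, Finset.mem_univ, true_and, lt_nearest_iff]
    constructor
    · rintro ⟨⟨v0, hv0⟩, hall⟩
      constructor
      · intro v hv i hi
        have := hall v ⟨i, hi⟩
        rw [mem_ball] at hv
        omega
      · push_neg
        obtain ⟨i0, hi0⟩ := hv0
        exact ⟨v0, trivial, i0, hi0⟩
    · rintro ⟨hball, hnot⟩
      push_neg at hnot
      obtain ⟨v0, -, i0, hi0⟩ := hnot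
      refine ⟨⟨v0, i0, hi0⟩, fun v hv => ?_⟩
      by_contra hle
      push_neg at hle
      obtain ⟨i, hi⟩ := hv
      exact hball v (mem_ball.mpr hle) i hi
  have hsub : (Finset.univ.filter fun ω : Placement m M K =>
          ∀ v ∈ (Finset.univ : Finset (Node m)), ∀ i, ω v i ≠ j)
      ⊆ (Finset.univ.filter fun ω : Placement m M K => ∀ v ∈ ball u r, ∀ i, ω v i ≠ j) := by
    intro ω hω
    simp only [Finset.mem_filter, Finset.mem_univ, true_and] at hω ⊢
    exact fun v _ i => hω v trivial i
  rw [hsplit, Finset.card_sdiff_of_subset hsub, card_avoidSet j, card_avoidSet j]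
  rw [Finset.card_univ, card_node, Nat.sub_self, pow_zero, mul_one]

lemma sum_nearest_eq (u : Node m) (j : Fin K) :
    ∑ ω : Placement m M K, nearestDist ω u j
      = ∑ r ∈ Finset.range m,
          (Finset.univ.filter fun ω : Placement m M K => r < nearestDist ω u j).card := by
  have key : ∀ ω : Placement m M K,
      nearestDist ω u j = ∑ r ∈ Finset.range m, if r < nearestDist ω u j then 1 else 0 := by
    intro ω
    have hle := nearest_le ω u j
    rw [← Finset.card_filter]
    have h : (Finset.range m).filter (fun r => r < nearestDist ω u j)
        = Finset.range (nearestDist ω u j) := by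
      ext r
      simp only [Finset.mem_filter, Finset.mem_range]
      omega
    rw [h, Finset.card_range]
  calc ∑ ω : Placement m M K, nearestDist ω u j
      = ∑ ω : Placement m M K, ∑ r ∈ Finset.range m, (if r < nearestDist ω u j then 1 else 0) :=
        Finset.sum_congr rfl (fun ω _ => key ω)
    _ = ∑ r ∈ Finset.range m, ∑ ω : Placement m M K, (if r < nearestDist ω u j then 1 else 0) :=
        Finset.sum_comm
    _ = _ := Finset.sum_congr rfl (fun r _ => (Finset.card_filter _ _).symm)

noncomputable def gFun (m M K : ℕ) (u : Node m) : ℝ :=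
  ∑ r ∈ Finset.range m,
    ((((K:ℝ)-1)/K)^(M * (ball u r).card) - (((K:ℝ)-1)/K)^(M*(m*m)))

lemma real_id (c : ℝ) (hc : c ≠ 0) (E F : ℕ) :
    (c-1)^E * c^F - (c-1)^(E+F)
      = c^(E+F) * (((c-1)/c)^E - ((c-1)/c)^(E+F)) := by
  rw [div_pow, div_pow, pow_add]
  field_simp
  ring

lemma expect_eq (hK : 0 < K) (u : Node m) (j : Fin K) :
    (∑ ω : Placement m M K, (nearestDist ω u j : ℝ))
      = (Fintype.card (Placement m M K) : ℝ) * gFun m M K u := by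
  rw [← Nat.cast_sum, sum_nearest_eq u j, Nat.cast_sum, gFun, Finset.mul_sum]
  refine Finset.sum_congr rfl (fun r _ => ?_)
  rw [count_gt u j r]
  have hb : (ball u r).card ≤ m*m := by
    have h := Finset.card_le_univ (ball u r)
    rwa [card_node] at h
  set b := (ball u r).card with hbdef
  have hle : ((K-1)^M)^(m*m) ≤ ((K-1)^M)^b * (K^M)^(m*m-b) := by
    calc ((K-1)^M)^(m*m) = ((K-1)^M)^b * ((K-1)^M)^(m*m-b) := by
          rw [← pow_add, Nat.add_sub_cancel' hb]
      _ ≤ ((K-1)^M)^b * (K^M)^(m*m-b) :=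
          Nat.mul_le_mul_left _ (Nat.pow_le_pow_left (Nat.pow_le_pow_left (Nat.sub_le K 1) M) _)
  rw [Nat.cast_sub hle, card_placement]
  have hK0 : ((K:ℝ)) ≠ 0 := Nat.cast_ne_zero.mpr hK.ne'
  have hcast : ((K-1 : ℕ) : ℝ) = (K:ℝ) - 1 := by
    rw [Nat.cast_sub hK]; norm_num
  push_cast [hcast]
  rw [← pow_mul, ← pow_mul, ← pow_mul, ← pow_mul]
  have hmm2 : M * (m*m) = M*b + M*(m*m-b) := by rw [← Nat.mul_add, Nat.add_sub_cancel' hb]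
  rw [hmm2]
  exact real_id (K:ℝ) hK0 (M*b) (M*(m*m-b))

lemma pair_sum (g : ℕ → ℝ) (n : ℕ) :
    ∑ r ∈ Finset.range (2*n), g r = ∑ s ∈ Finset.range n, (g (2*s) + g (2*s+1)) := by
  induction n with
  | zero => simp
  | succ n ih =>
      rw [Finset.sum_range_succ, ← ih, Nat.mul_succ,
        show 2*n+2 = (2*n+1)+1 from rfl, Finset.sum_range_succ, Finset.sum_range_succ]
      ring

lemma geom_bound (ρ : ℝ) (h0 : 0 ≤ ρ) (h1 : ρ < 1) (n : ℕ) :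
    ∑ i ∈ Finset.range n, ρ^i ≤ (1-ρ)⁻¹ := by
  have h := geom_sum_Ico_le_of_lt_one h0 h1 (m := 0) (n := n)
  rw [← Finset.range_eq_Ico] at h
  simpa [one_div] using h

lemma shift_geom_sum (ρ : ℝ) (h0 : 0 ≤ ρ) (h1 : ρ < 1) (T n : ℕ) :
    ∑ s ∈ Finset.range n, ρ^(s - T) ≤ T + (1-ρ)⁻¹ := by
  have hsub : ∑ s ∈ Finset.range n, ρ^(s - T) ≤ ∑ s ∈ Finset.range (T+n), ρ^(s - T) := by
    apply Finset.sum_le_sum_of_subset_of_nonneg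
    · exact Finset.range_subset_range.mpr (by omega)
    · intro i _ _; positivity
  refine le_trans hsub ?_
  rw [Finset.range_eq_Ico, ← Finset.sum_Ico_consecutive _ (Nat.zero_le T) (by omega : T ≤ T + n)]
  have h1' : ∑ s ∈ Finset.Ico 0 T, ρ^(s-T) = T := by
    have hone : ∀ s ∈ Finset.Ico 0 T, ρ^(s-T) = 1 := by
      intro s hs
      rw [Finset.mem_Ico] at hs
      rw [Nat.sub_eq_zero_of_le (by omega), pow_zero]
    rw [Finset.sum_congr rfl hone, Finset.sum_const, Nat.card_Ico]
    simp
  have h2' : ∑ s ∈ Finset.Ico T (T+n), ρ^(s-T) ≤ (1-ρ)⁻¹ := by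
    rw [Finset.sum_Ico_eq_sum_range]
    simp only [Nat.add_sub_cancel_left, Nat.add_sub_cancel]
    exact geom_bound ρ h0 h1 n
  rw [h1']
  linarith

lemma exp_neg_le_one_sub_half (x : ℝ) (h0 : 0 < x) (h1 : x ≤ 1) :
    Real.exp (-x) ≤ 1 - x/2 := by
  have h2 : 1 + x ≤ Real.exp x := by linarith [Real.add_one_le_exp x]
  have h3 : Real.exp (-x) = (Real.exp x)⁻¹ := Real.exp_neg x
  have h4 : (Real.exp x)⁻¹ ≤ (1+x)⁻¹ := by
    apply inv_anti₀ (by linarith) h2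
  have h5 : (1+x)⁻¹ ≤ 1 - x/2 := by
    rw [inv_le_iff_one_le_mul₀ (by linarith)]
    nlinarith
  linarith

lemma sq_sum_bound (θ : ℝ) (h0 : 0 < θ) (h1 : θ ≤ 1) (n : ℕ) :
    ∑ s ∈ Finset.range n, Real.exp (-θ)^((s+1)^2) ≤ 4 / Real.sqrt θ := by
  set x := Real.sqrt θ with hx
  have hx0 : 0 < x := Real.sqrt_pos.mpr h0
  have hx1 : x ≤ 1 := by
    rw [hx, show (1:ℝ) = Real.sqrt 1 by rw [Real.sqrt_one]]
    exact Real.sqrt_le_sqrt h1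
  have hxx : x * x = θ := Real.mul_self_sqrt h0.le
  set T := ⌈x⁻¹⌉₊ with hT
  have hinv1 : 1 ≤ x⁻¹ := one_le_inv_iff₀.mpr ⟨hx0, hx1⟩
  have hT1 : x⁻¹ ≤ (T:ℝ) := Nat.le_ceil _
  have hT2 : (T:ℝ) ≤ 2/x := by
    have h := Nat.ceil_lt_add_one (show (0:ℝ) ≤ x⁻¹ by positivity)
    have : (T:ℝ) ≤ x⁻¹ + x⁻¹ := by linarith
    calc (T:ℝ) ≤ x⁻¹ + x⁻¹ := this
      _ = 2/x := by rw [div_eq_mul_inv]; ring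
  set ρ := Real.exp (-x) with hρ
  have hρ0 : 0 ≤ ρ := (Real.exp_pos _).le
  have hρ1 : ρ < 1 := by
    rw [hρ, Real.exp_lt_one_iff]; linarith
  have hterm : ∀ s : ℕ, Real.exp (-θ)^((s+1)^2) ≤ ρ^((s+1) - T) := by
    intro s
    rw [hρ, ← Real.exp_nat_mul, ← Real.exp_nat_mul, Real.exp_le_exp]
    have hnat : T * ((s+1) - T) ≤ (s+1)^2 := by
      rcases le_or_gt T (s+1) with h | h
      · calc T * ((s+1)-T) ≤ (s+1) * (s+1) := Nat.mul_le_mul h (Nat.sub_le _ _)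
          _ = (s+1)^2 := (sq _).symm
      · simp [Nat.sub_eq_zero_of_le h.le]
    have hxθT : x ≤ θ * T := by
      have : x = θ * x⁻¹ := by
        field_simp
        nlinarith [hxx]
      rw [this]
      exact mul_le_mul_of_nonneg_left hT1 h0.le
    have hcast : (T:ℝ) * (((s+1) - T : ℕ) : ℝ) ≤ (((s+1)^2 : ℕ) : ℝ) := by
      exact_mod_cast hnat
    have ha0 : (0:ℝ) ≤ (((s+1) - T : ℕ) : ℝ) := Nat.cast_nonneg _
    have step1 : x * (((s+1) - T : ℕ) : ℝ) ≤ θ * ((T:ℝ) * (((s+1) - T : ℕ) : ℝ)) := by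
      rw [← mul_assoc]
      exact mul_le_mul_of_nonneg_right hxθT ha0
    have step2 : θ * ((T:ℝ) * (((s+1) - T : ℕ) : ℝ)) ≤ θ * (((s+1)^2 : ℕ) : ℝ) :=
      mul_le_mul_of_nonneg_left hcast h0.le
    nlinarith [step1, step2]
  calc ∑ s ∈ Finset.range n, Real.exp (-θ)^((s+1)^2)
      ≤ ∑ s ∈ Finset.range n, ρ^((s+1) - T) := Finset.sum_le_sum (fun s _ => hterm s)
    _ ≤ ∑ s ∈ Finset.range n, ρ^(s - T) := by
        apply Finset.sum_le_sum
        intro s _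
        exact pow_le_pow_of_le_one hρ0 hρ1.le (by omega)
    _ ≤ T + (1-ρ)⁻¹ := shift_geom_sum ρ hρ0 hρ1 T n
    _ ≤ 2/x + 2/x := by
        have hhalf : x/2 ≤ 1 - ρ := by
          have := exp_neg_le_one_sub_half x hx0 hx1
          rw [hρ]; linarith
        have hinv : (1-ρ)⁻¹ ≤ 2/x := by
          calc (1-ρ)⁻¹ ≤ (x/2)⁻¹ := inv_anti₀ (by positivity) hhalf
            _ = 2/x := by rw [inv_div]
        linarith
    _ = 4/x := by ring


set_option maxHeartbeats 1000000 in
lemma gFun_le (hm : 0 < m) (hM : 0 < M) (hMK : M ≤ K) (u : Node m) :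
    gFun m M K u ≤ 8 * Real.sqrt ((K:ℝ)/M) := by
  have hK : 0 < K := lt_of_lt_of_le hM hMK
  have hK0 : (0:ℝ) < K := by exact_mod_cast hK
  have hM0 : (0:ℝ) < M := by exact_mod_cast hM
  have hK1 : (1:ℝ) ≤ K := by exact_mod_cast hK
  set Q : ℝ := ((K:ℝ)-1)/K with hQdef
  clear_value Q
  have hQ0 : 0 ≤ Q := by rw [hQdef]; exact div_nonneg (by linarith) hK0.le
  set θ : ℝ := (M:ℝ)/K with hθdef
  clear_value θ
  have hθ0 : 0 < θ := by rw [hθdef]; exact div_pos hM0 hK0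
  have hgg : gFun m M K u = ∑ r ∈ Finset.range m,
      (Q^(M * (ball u r).card) - Q^(M*(m*m))) := by rw [hQdef]; rfl
  have hθ1 : θ ≤ 1 := by
    rw [hθdef, div_le_one hK0]; exact_mod_cast hMK
  have hQE : Q^M ≤ Real.exp (-θ) := by
    have e1 : Q ≤ Real.exp (-(1/(K:ℝ))) := by
      have h := Real.add_one_le_exp (-(1/(K:ℝ)))
      have e2 : Q = 1 - 1/(K:ℝ) := by rw [hQdef]; field_simp
      linarith
    calc Q^M ≤ Real.exp (-(1/(K:ℝ)))^M := pow_le_pow_left₀ hQ0 e1 M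
      _ = Real.exp (-θ) := by
          rw [← Real.exp_nat_mul]
          congr 1
          rw [hθdef]; ring
  have hexp1 : Real.exp (-θ) ≤ 1 := by
    rw [← Real.exp_zero]
    exact Real.exp_le_exp.mpr (by linarith)
  have key : ∀ r ∈ Finset.range m,
      Q^(M * (ball u r).card) - Q^(M*(m*m)) ≤ Real.exp (-θ)^((r/2+1)^2) := by
    intro r hr
    rw [Finset.mem_range] at hr
    have hball : (r/2+1)^2 ≤ (ball u r).card := card_ball_ge u r (r/2) (by omega) (by omega)
    have t1 : Q^(M * (ball u r).card) ≤ Real.exp (-θ)^((r/2+1)^2) := by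
      rw [pow_mul]
      calc (Q^M)^(ball u r).card ≤ Real.exp (-θ)^(ball u r).card :=
            pow_le_pow_left₀ (pow_nonneg hQ0 M) hQE _
        _ ≤ Real.exp (-θ)^((r/2+1)^2) :=
            pow_le_pow_of_le_one (Real.exp_pos _).le hexp1 hball
    have t2 : 0 ≤ Q^(M*(m*m)) := pow_nonneg hQ0 _
    linarith
  have hsum1 : gFun m M K u ≤ ∑ r ∈ Finset.range m, Real.exp (-θ)^((r/2+1)^2) := by
    rw [hgg]; exact Finset.sum_le_sum key
  have hsum2 : ∑ r ∈ Finset.range m, Real.exp (-θ)^((r/2+1)^2)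
      ≤ ∑ r ∈ Finset.range (2*m), Real.exp (-θ)^((r/2+1)^2) :=
    Finset.sum_le_sum_of_subset_of_nonneg (Finset.range_subset_range.mpr (by omega))
      (fun i _ _ => by positivity)
  have hsum3 : ∑ r ∈ Finset.range (2*m), Real.exp (-θ)^((r/2+1)^2)
      = 2 * ∑ s ∈ Finset.range m, Real.exp (-θ)^((s+1)^2) := by
    rw [pair_sum (fun r => Real.exp (-θ)^((r/2+1)^2)) m]
    rw [Finset.mul_sum]
    apply Finset.sum_congr rfl
    intro s _
    have e1 : (2*s)/2 = s := by omega
    have e2 : (2*s+1)/2 = s := by omega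
    simp only [e1, e2]
    ring
  have hsum4 : ∑ s ∈ Finset.range m, Real.exp (-θ)^((s+1)^2) ≤ 4 / Real.sqrt θ :=
    sq_sum_bound θ hθ0 hθ1 m
  have hfin : (Real.sqrt θ)⁻¹ = Real.sqrt ((K:ℝ)/M) := by
    rw [← Real.sqrt_inv]
    congr 1
    rw [hθdef, inv_div]
  calc gFun m M K u ≤ 2 * ∑ s ∈ Finset.range m, Real.exp (-θ)^((s+1)^2) := by
        rw [← hsum3]; linarith
    _ ≤ 2 * (4 / Real.sqrt θ) := by linarith
    _ = 8 * Real.sqrt ((K:ℝ)/M) := by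
        rw [div_eq_mul_inv, hfin]; ring

set_option maxHeartbeats 1000000 in
lemma gFun_ge (hm : 0 < m) (hM : 0 < M) (hMK : M ≤ K) (hKm : K ≤ m*m)
    (h400 : 400 * (M:ℝ) ≤ K) (u : Node m) :
    (1/20) * Real.sqrt ((K:ℝ)/M) ≤ gFun m M K u := by
  have hK : 0 < K := lt_of_lt_of_le hM hMK
  have hK0 : (0:ℝ) < K := by exact_mod_cast hK
  have hM0 : (0:ℝ) < M := by exact_mod_cast hM
  have hM1 : (1:ℝ) ≤ M := by exact_mod_cast hM
  have hK1 : (1:ℝ) ≤ K := by exact_mod_cast hK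
  set Q : ℝ := ((K:ℝ)-1)/K with hQdef
  clear_value Q
  have hQ0 : 0 ≤ Q := by rw [hQdef]; exact div_nonneg (by linarith) hK0.le
  have hQ1 : Q ≤ 1 := by rw [hQdef, div_le_one hK0]; linarith
  have hgg : gFun m M K u = ∑ r ∈ Finset.range m,
      (Q^(M * (ball u r).card) - Q^(M*(m*m))) := by rw [hQdef]; rfl
  set y := Real.sqrt ((K:ℝ)/M) with hy
  clear_value y
  have hy0 : 0 < y := by rw [hy]; exact Real.sqrt_pos.mpr (by positivity)
  have hyy : y*y = (K:ℝ)/M := by rw [hy]; exact Real.mul_self_sqrt (by positivity)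
  have hy20 : 20 ≤ y := by
    have h1 : (400:ℝ) ≤ (K:ℝ)/M := by
      rw [le_div_iff₀ hM0]; linarith
    rw [hy]
    calc (20:ℝ) = Real.sqrt 400 := by
          rw [show (400:ℝ) = 20^2 by norm_num, Real.sqrt_sq (by norm_num : (0:ℝ) ≤ 20)]
      _ ≤ Real.sqrt ((K:ℝ)/M) := Real.sqrt_le_sqrt h1
  set R := ⌊y/6⌋₊ with hR
  clear_value R
  have hR1 : (R:ℝ) ≤ y/6 := by
    rw [hR]; exact Nat.floor_le (by linarith)
  have hR2 : y/6 - 1 ≤ (R:ℝ) := by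
    rw [hR]
    have := Nat.lt_floor_add_one (y/6)
    linarith
  have hRy : y/10 ≤ (R:ℝ) := by linarith
  have hRm : R ≤ m := by
    have hm0 : (0:ℝ) < (m:ℝ) := by exact_mod_cast hm
    have h2 : y ≤ (m:ℝ) := by
      rw [hy]

      calc Real.sqrt ((K:ℝ)/M) ≤ Real.sqrt ((m:ℝ)*(m:ℝ)) := by
            apply Real.sqrt_le_sqrt
            have hKmm : (K:ℝ) ≤ (m:ℝ)*(m:ℝ) := by exact_mod_cast hKm
            calc (K:ℝ)/M ≤ (K:ℝ) := by
                  rw [div_le_iff₀ hM0]; nlinarith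
              _ ≤ (m:ℝ)*(m:ℝ) := hKmm
        _ = (m:ℝ) := Real.sqrt_mul_self hm0.le
    have : (R:ℝ) ≤ (m:ℝ) := by linarith
    exact_mod_cast this
  have hQmm : Q^(M*(m*m)) ≤ Real.exp (-1) := by
    have hQE : Q^M ≤ Real.exp (-((M:ℝ)/K)) := by
      have e1 : Q ≤ Real.exp (-(1/(K:ℝ))) := by
        have h := Real.add_one_le_exp (-(1/(K:ℝ)))
        have e2 : Q = 1 - 1/(K:ℝ) := by rw [hQdef]; field_simp
        linarith
      calc Q^M ≤ Real.exp (-(1/(K:ℝ)))^M := pow_le_pow_left₀ hQ0 e1 M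
        _ = Real.exp (-((M:ℝ)/K)) := by
            rw [← Real.exp_nat_mul]; congr 1; ring
    calc Q^(M*(m*m)) = (Q^M)^(m*m) := pow_mul Q M (m*m)
      _ ≤ Real.exp (-((M:ℝ)/K))^(m*m) := pow_le_pow_left₀ (pow_nonneg hQ0 M) hQE _
      _ = Real.exp (-((M:ℝ)/K) * (m*m)) := by
          rw [← Real.exp_nat_mul]; congr 1; push_cast; ring
      _ ≤ Real.exp (-1) := by
          apply Real.exp_le_exp.mpr
          rw [neg_mul, neg_le_neg_iff]
          rw [div_mul_eq_mul_div, le_div_iff₀ hK0]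
          have hmm : (K:ℝ) ≤ ((m*m : ℕ):ℝ) := by exact_mod_cast hKm
          push_cast at hmm ⊢
          nlinarith
  have hexp1 : Real.exp (-1) ≤ (0.38 : ℝ) := by
    have h := Real.exp_one_gt_d9
    rw [Real.exp_neg]
    calc (Real.exp 1)⁻¹ ≤ (2.7182818283:ℝ)⁻¹ := inv_anti₀ (by norm_num) h.le
      _ ≤ 0.38 := by norm_num
  have hterm : ∀ r ∈ Finset.range R, (1:ℝ)/2 ≤ Q^(M * (ball u r).card) - Q^(M*(m*m)) := by
    intro r hr
    rw [Finset.mem_range] at hr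
    have hb4 : (ball u r).card ≤ 4*R^2 := by
      refine le_trans (card_ball_le u r) ?_
      have h1 : 2*r+1 ≤ 2*R := by omega
      calc (2*r+1)^2 ≤ (2*R)^2 := Nat.pow_le_pow_left h1 2
        _ = 4*R^2 := by ring
    have hmono : Q^(M*(4*R^2)) ≤ Q^(M*(ball u r).card) :=
      pow_le_pow_of_le_one hQ0 hQ1 (Nat.mul_le_mul_left M hb4)
    have hbern : 1 - (M:ℝ)*(4*(R:ℝ)^2)/K ≤ Q^(M*(4*R^2)) := by
      have hK2 : (1:ℝ)/K ≤ 2 := by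
        rw [div_le_iff₀ hK0]; linarith
      have h := one_add_mul_le_pow (show (-2:ℝ) ≤ -(1/(K:ℝ)) by linarith) (M*(4*R^2))
      have e2 : (1:ℝ) + -(1/(K:ℝ)) = Q := by rw [hQdef]; field_simp; try ring
      rw [e2] at h
      have ecast : ((M*(4*R^2) : ℕ) : ℝ) = (M:ℝ)*(4*(R:ℝ)^2) := by push_cast; ring
      rw [ecast] at h
      have e3 : 1 - (M:ℝ)*(4*(R:ℝ)^2)/K = 1 + (M:ℝ)*(4*(R:ℝ)^2) * (-(1/(K:ℝ))) := by
        field_simp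
        try ring
      rw [e3]
      exact h
    have hR2b : (R:ℝ)^2 ≤ ((K:ℝ)/M)/36 := by
      have hRn : (0:ℝ) ≤ (R:ℝ) := Nat.cast_nonneg R
      nlinarith [hR1, hyy]
    have hfrac : (M:ℝ)*(4*(R:ℝ)^2)/K ≤ 1/9 := by
      rw [div_le_iff₀ hK0]
      have h36 : (R:ℝ)^2 * M ≤ (K:ℝ)/36 := by
        rw [div_div] at hR2b
        rw [le_div_iff₀ (by positivity : (0:ℝ) < 36)]
        calc (R:ℝ)^2 * M * 36 = (R:ℝ)^2 * (M*36) := by ring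
          _ ≤ ((K:ℝ)/(M*36)) * (M*36) := by
              apply mul_le_mul_of_nonneg_right hR2b (by positivity)
          _ = (K:ℝ) := by field_simp
      have e4 : (M:ℝ)*(4*(R:ℝ)^2) = 4*((R:ℝ)^2*(M:ℝ)) := by ring
      linarith
    linarith [hmono, hbern, hQmm, hexp1]
  have hnonneg : ∀ r ∈ Finset.range m, 0 ≤ Q^(M * (ball u r).card) - Q^(M*(m*m)) := by
    intro r _
    have hb : (ball u r).card ≤ m*m := by
      have h := Finset.card_le_univ (ball u r)
      rwa [card_node] at h
    have := pow_le_pow_of_le_one hQ0 hQ1 (Nat.mul_le_mul_left M hb)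
    linarith
  have hsum : ((R:ℝ)) * (1/2) ≤ gFun m M K u := by
    rw [hgg]
    have h1 : ∑ r ∈ Finset.range R, ((1:ℝ)/2)
        ≤ ∑ r ∈ Finset.range R, (Q^(M * (ball u r).card) - Q^(M*(m*m))) :=
      Finset.sum_le_sum hterm
    have h2 : ∑ r ∈ Finset.range R, (Q^(M * (ball u r).card) - Q^(M*(m*m)))
        ≤ ∑ r ∈ Finset.range m, (Q^(M * (ball u r).card) - Q^(M*(m*m))) :=
      Finset.sum_le_sum_of_subset_of_nonneg (Finset.range_subset_range.mpr hRm)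
        (fun i hi _ => hnonneg i hi)
    rw [Finset.sum_const, Finset.card_range, nsmul_eq_mul] at h1
    exact le_trans (le_trans (le_of_eq (by ring)) h1) h2
  calc (1/20) * y ≤ (R:ℝ) * (1/2) := by linarith
    _ ≤ gFun m M K u := hsum

lemma commCost_eq (hm : 0 < m) (hK : 0 < K) :
    commCostI m M K = (∑ u : Node m, gFun m M K u) / ((m:ℝ)*(m:ℝ)) := by
  have hne : Nonempty (Placement m M K) := ⟨fun _ _ => ⟨0, hK⟩⟩
  have hcard0 : (0:ℝ) < (Fintype.card (Placement m M K) : ℝ) := by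
    exact_mod_cast Fintype.card_pos
  have hK0 : (0:ℝ) < K := by exact_mod_cast hK
  have hm0 : (0:ℝ) < (m:ℝ) := by exact_mod_cast hm
  unfold commCostI
  have h1 : (∑ ω : Placement m M K, ∑ u : Node m, ∑ j : Fin K, (nearestDist ω u j : ℝ))
      = ∑ u : Node m, ∑ ω : Placement m M K, ∑ j : Fin K, (nearestDist ω u j : ℝ) :=
    Finset.sum_comm
  have h2 : ∀ u : Node m, ∑ ω : Placement m M K, ∑ j : Fin K, (nearestDist ω u j : ℝ)
      = ∑ j : Fin K, ∑ ω : Placement m M K, (nearestDist ω u j : ℝ) :=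
    fun u => Finset.sum_comm
  have h3 : ∀ u : Node m, ∑ j : Fin K, ∑ ω : Placement m M K, (nearestDist ω u j : ℝ)
      = (K:ℝ) * ((Fintype.card (Placement m M K) : ℝ) * gFun m M K u) := by
    intro u
    rw [Finset.sum_congr rfl (fun j _ => expect_eq hK u j), Finset.sum_const,
      Finset.card_univ, Fintype.card_fin, nsmul_eq_mul]
  rw [h1, Finset.sum_congr rfl (fun u _ => (h2 u).trans (h3 u)),
    ← Finset.mul_sum, ← Finset.mul_sum]
  have hm2 : ((m^2 : ℕ):ℝ) = (m:ℝ)*(m:ℝ) := by push_cast; ring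
  rw [hm2]
  field_simp

end S4

/-- Under the Uniform popularity distribution and `M = o(K)` (in the
regimes of the model, where the library size is at most the number `n = m²` of nodes),
the communication cost of Strategy I is `Θ(√(K/M))` as `n → ∞`. -/
theorem statement4 (K M : ℕ → ℕ) (hM : ∀ n, 1 ≤ M n) (hMK : ∀ n, M n ≤ K n)
    (hKn : ∀ m : ℕ, K (m ^ 2) ≤ m ^ 2)
    (hlittle : (fun n => (M n : ℝ)) =o[atTop] fun n => (K n : ℝ)) :
    ∃ c₁ c₂ : ℝ, 0 < c₁ ∧ 0 < c₂ ∧ ∃ N : ℕ, ∀ m : ℕ, N ≤ m →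
      c₁ * Real.sqrt ((K (m ^ 2) : ℝ) / (M (m ^ 2) : ℝ)) ≤
          commCostI m (M (m ^ 2)) (K (m ^ 2)) ∧
      commCostI m (M (m ^ 2)) (K (m ^ 2)) ≤
          c₂ * Real.sqrt ((K (m ^ 2) : ℝ) / (M (m ^ 2) : ℝ)) := by
  refine ⟨1/20, 8, by norm_num, by norm_num, ?_⟩
  have h400 := hlittle.def (show (0:ℝ) < 1/400 by norm_num)
  rw [Filter.eventually_atTop] at h400
  obtain ⟨N₀, hN₀⟩ := h400
  refine ⟨max N₀ 1, fun m hm => ?_⟩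
  have hm1 : 1 ≤ m := le_trans (le_max_right _ _) hm
  have hmsq : m ≤ m^2 := Nat.le_self_pow (by norm_num) m
  have hmN : N₀ ≤ m^2 := le_trans (le_trans (le_max_left _ _) hm) hmsq
  have h4 := hN₀ _ hmN
  simp only [Real.norm_natCast] at h4
  set MM := M (m^2) with hMM
  set KK := K (m^2) with hKK
  have hM' : 0 < MM := hM _
  have hMK' : MM ≤ KK := hMK _
  have hKm' : KK ≤ m*m := by
    have := hKn m
    have hsq : m^2 = m*m := sq m
    omega
  have h400' : 400*(MM:ℝ) ≤ KK := by
    have hKpos : (0:ℝ) ≤ (KK:ℝ) := Nat.cast_nonneg _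
    linarith [h4]
  have hm0 : (0:ℝ) < (m:ℝ) := by exact_mod_cast hm1
  have hcc := S4.commCost_eq (m := m) (M := MM) (K := KK) hm1 (lt_of_lt_of_le hM' hMK')
  rw [hcc]
  have hL : ∀ u : Node m, (1/20) * Real.sqrt ((KK:ℝ)/MM) ≤ S4.gFun m MM KK u :=
    fun u => S4.gFun_ge hm1 hM' hMK' hKm' h400' u
  have hU : ∀ u : Node m, S4.gFun m MM KK u ≤ 8 * Real.sqrt ((KK:ℝ)/MM) :=
    fun u => S4.gFun_le hm1 hM' hMK' u
  have hcardu : (Finset.univ : Finset (Node m)).card = m*m := by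
    rw [Finset.card_univ, S4.card_node]
  have hmm0 : (0:ℝ) < (m:ℝ)*(m:ℝ) := by positivity
  constructor
  · rw [le_div_iff₀ hmm0]
    have h := Finset.card_nsmul_le_sum Finset.univ (S4.gFun m MM KK)
      ((1/20) * Real.sqrt ((KK:ℝ)/MM)) (fun u _ => hL u)
    rw [hcardu, nsmul_eq_mul] at h
    calc (1/20) * Real.sqrt ((KK:ℝ)/MM) * ((m:ℝ)*(m:ℝ))
        = ((m*m : ℕ):ℝ) * ((1/20) * Real.sqrt ((KK:ℝ)/MM)) := by push_cast; ring
      _ ≤ _ := h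
  · rw [div_le_iff₀ hmm0]
    have h := Finset.sum_le_card_nsmul Finset.univ (S4.gFun m MM KK)
      (8 * Real.sqrt ((KK:ℝ)/MM)) (fun u _ => hU u)
    rw [hcardu, nsmul_eq_mul] at h
    calc (∑ u : Node m, S4.gFun m MM KK u)
        ≤ ((m*m : ℕ):ℝ) * (8 * Real.sqrt ((KK:ℝ)/MM)) := h
      _ = 8 * Real.sqrt ((KK:ℝ)/MM) * ((m:ℝ)*(m:ℝ)) := by push_cast; ring
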